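/- Let H be a finite subgroup of an infinite C'-cofinite group G. Then either the normalizer N_G(H) is finite, or H is contained in the center Z(G). In particular, H is a normal subgroup of G if and only if H ≤ Z(G). -/

import Mathlib

/-- `G` is `C'`-cofinite: the centralizer of every element is either finite or all of `G`. -/
def CprimeCofinite (G : Type*) [Group G] : Prop :=
  ∀ g : G, {x : G | x * g = g * x}.Finite ∨ {x : G | x * g = g * x} = Set.univ

lemma key_lemma {G : Type*} [Group G] (hG : CprimeCofinite G)
    (H : Subgroup G) (hH : (H : Set G).Finite)
    (hN : ¬ ((Subgroup.normalizer (H : Set G)) : Set G).Finite) : H ≤ Subgroup.center G := by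
  intro h hh
  rcases hG h with hfin | huniv
  · exfalso
    have hNinf : ((Subgroup.normalizer (H : Set G)) : Set G).Infinite := hN
    haveI : Infinite ((Subgroup.normalizer (H : Set G)) : Set G) := hNinf.to_subtype
    haveI : Finite (H : Set G) := hH
    let f : ↥((Subgroup.normalizer (H : Set G)) : Set G) → ↥(H : Set G) := fun n =>
      ⟨(n : G) * h * (n : G)⁻¹, by
        have hmem : (n : G) ∈ (Subgroup.normalizer (H : Set G)) := n.2
        exact (Subgroup.mem_normalizer_iff.mp hmem h).mp hh⟩
    obtain ⟨k, hk⟩ := Finite.exists_infinite_fiber f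
    have hfib : (f ⁻¹' {k} : Set ((Subgroup.normalizer (H : Set G)) : Set G)).Infinite :=
      Set.infinite_coe_iff.mp hk
    obtain ⟨n₀, hn₀⟩ := hfib.nonempty
    -- translate the fiber into the centralizer of h
    have himg : ((fun n : ↥((Subgroup.normalizer (H : Set G)) : Set G) => (n₀ : G)⁻¹ * (n : G)) '' (f ⁻¹' {k})).Infinite := by
      apply hfib.image
      intro a _ b _ hab
      exact Subtype.ext (by
        have := mul_left_cancel hab
        exact this)
    apply hfin.not_infinite
    apply himg.mono
    rintro x ⟨n, hn, rfl⟩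
    have hn' : (n : G) * h * (n : G)⁻¹ = (n₀ : G) * h * (n₀ : G)⁻¹ := by
      have h1 : f n = k := hn
      have h2 : f n₀ = k := hn₀
      have := h1.trans h2.symm
      exact congrArg Subtype.val this
    show (n₀ : G)⁻¹ * (n : G) * h = h * ((n₀ : G)⁻¹ * (n : G))
    have key : (n : G) * h = (n₀ : G) * h * (n₀ : G)⁻¹ * (n : G) := by
      rw [← hn']; group
    rw [mul_assoc, key]
    group
  · exact Subgroup.mem_center_iff.mpr (fun g => by
      have hg : g ∈ ({x : G | x * h = h * x}) := by rw [huniv]; trivial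
      exact hg)

theorem stmt_10 {G : Type*} [Group G] [Infinite G] (hG : CprimeCofinite G)
    (H : Subgroup G) (hH : (H : Set G).Finite) :
    ((Subgroup.normalizer (H : Set G) : Set G).Finite ∨ H ≤ Subgroup.center G) ∧
    (H.Normal ↔ H ≤ Subgroup.center G) := by
  constructor
  · by_cases hN : ((Subgroup.normalizer (H : Set G)) : Set G).Finite
    · exact Or.inl hN
    · exact Or.inr (key_lemma hG H hH hN)
  · constructor
    · intro hnorm
      have htop : (Subgroup.normalizer (H : Set G)) = ⊤ := Subgroup.normalizer_eq_top_iff.mpr hnorm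
      apply key_lemma hG H hH
      rw [htop]
      intro hfin
      exact Set.infinite_univ (α := G) (by simpa using hfin)
    · intro hle
      exact ⟨fun h hh g => by
        have := Subgroup.mem_center_iff.mp (hle hh) g
        have : g * h * g⁻¹ = h := by rw [this]; group
        rwa [this]⟩
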